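/- arXiv:2305.01282 — 4 statements merged into one kernel-verified Lean document; each statement's English description precedes it below -/
import Mathlib

section
/- For -1<q<1 and real θ, one has exp(-i v_q(θ)) = (1 - q e^{iθ})/(e^{iθ} - q), where v_q(θ) = ∫₀^θ (1-q²)/(1-2q cos t + q²) dt. -/
noncomputable def uq (q θ : ℝ) : ℝ := (1 - q ^ 2) / (1 - 2 * q * Real.cos θ + q ^ 2)

noncomputable def vq (q θ : ℝ) : ℝ := ∫ t in (0 : ℝ)..θ, uq q t

theorem exp_neg_I_vq (q : ℝ) (hq : -1 < q) (hq' : q < 1) (θ : ℝ) :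
    Complex.exp (-(Complex.I * (vq q θ : ℝ))) =
      (1 - (q : ℂ) * Complex.exp (Complex.I * (θ : ℝ))) /
        (Complex.exp (Complex.I * (θ : ℝ)) - (q : ℂ)) := by
  -- denominator positivity
  have hd : ∀ t : ℝ, 0 < 1 - 2 * q * Real.cos t + q ^ 2 := by
    intro t
    rcases le_or_gt q 0 with h | h
    · nlinarith [Real.neg_one_le_cos t, sq_nonneg (1 + q)]
    · nlinarith [Real.cos_le_one t, sq_nonneg (1 - q)]
  have hu_cont : Continuous (uq q) := by
    apply Continuous.div (by continuity) (by continuity)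
    intro t; exact (hd t).ne'
  -- z and its properties
  set z : ℝ → ℂ := fun t => Complex.exp (Complex.I * (t : ℝ)) with hzdef
  have habs : ∀ t, ‖z t‖ = 1 := by
    intro t
    simp [hzdef, Complex.norm_exp]
  have hzq : ∀ t, z t - (q : ℂ) ≠ 0 := by
    intro t h
    have hzq' : z t = (q : ℂ) := by linear_combination h
    have habs' := habs t
    rw [hzq', Complex.norm_real, Real.norm_eq_abs, abs_eq (by norm_num : (0:ℝ) ≤ 1)] at habs'
    rcases habs' with h2 | h2 <;> linarith
  have h1qz : ∀ t, (1 : ℂ) - (q : ℂ) * z t ≠ 0 := by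
    intro t h
    have hh : (q : ℂ) * z t = 1 := by linear_combination -h
    have h2 : ‖(q:ℂ) * z t‖ = 1 := by rw [hh]; simp
    rw [norm_mul, habs t, mul_one, Complex.norm_real, Real.norm_eq_abs] at h2
    rw [abs_eq (by norm_num)] at h2
    rcases h2 with h2 | h2 <;> linarith
  -- derivative of z
  have hzd : ∀ t : ℝ, HasDerivAt z (Complex.I * z t) t := by
    intro t
    have h1 : HasDerivAt (fun w : ℂ => Complex.exp (Complex.I * w))
        (Complex.exp (Complex.I * (t : ℝ)) * Complex.I) (t : ℝ) :=
      ((hasDerivAt_id ((t : ℝ) : ℂ)).const_mul Complex.I).cexp.congr_deriv (by simp [mul_comm])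
    simpa [hzdef, mul_comm] using h1.comp_ofReal
  -- derivative of vq
  have hvd : ∀ t : ℝ, HasDerivAt (vq q) (uq q t) t := fun t =>
    (hu_cont.integral_hasStrictDerivAt 0 t).hasDerivAt
  -- the auxiliary function g is constant
  set g : ℝ → ℂ := fun t => Complex.exp (Complex.I * (vq q t : ℝ)) * (1 - (q:ℂ) * z t) / (z t - q)
    with hgdef
  have hgd : ∀ t : ℝ, HasDerivAt g 0 t := by
    intro t
    have hE : HasDerivAt (fun t : ℝ => Complex.exp (Complex.I * (vq q t : ℝ)))
        (Complex.exp (Complex.I * (vq q t : ℝ)) * (Complex.I * (uq q t : ℝ))) t :=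
      (((hvd t).ofReal_comp).const_mul Complex.I).cexp
    have hN : HasDerivAt (fun t : ℝ => (1 : ℂ) - (q:ℂ) * z t) (-((q:ℂ) * (Complex.I * z t))) t :=
      (((hzd t).const_mul (q:ℂ)).const_sub 1).congr_deriv (by ring)
    have hD : HasDerivAt (fun t : ℝ => z t - (q:ℂ)) (Complex.I * z t) t := (hzd t).sub_const _
    have h := (hE.mul hN).div hD (hzq t)
    have hcos : (z t) ^ 2 + 1 = 2 * Complex.cos (t : ℂ) * z t := by
      rw [Complex.cos, hzdef]
      rw [show -((t:ℂ)) * Complex.I = -(Complex.I * (t:ℝ)) by ring,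
        show ((t:ℂ)) * Complex.I = Complex.I * (t:ℝ) by ring, Complex.exp_neg]
      have hne := Complex.exp_ne_zero (Complex.I * (t:ℝ))
      field_simp
    have hdne : (1 : ℂ) - 2 * q * Complex.cos (t:ℂ) + q ^ 2 ≠ 0 := by
      have hdr : ((1 - 2 * q * Real.cos t + q ^ 2 : ℝ) : ℂ) ≠ 0 := by
        exact_mod_cast (hd t).ne'
      push_cast at hdr
      exact hdr
    have hu : (uq q t : ℂ) = (1 - (q:ℂ) ^ 2) / (1 - 2 * q * Complex.cos (t:ℂ) + q ^ 2) := by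
      rw [uq]; push_cast; rfl
    have hkey : (uq q t : ℂ) * ((1 - (q:ℂ) * z t) * (z t - q)) = (1 - (q:ℂ)^2) * z t := by
      rw [hu, div_mul_eq_mul_div, div_eq_iff hdne]
      linear_combination (-(q:ℂ) * (1 - (q:ℂ)^2)) * hcos
    have key : (Complex.exp (Complex.I * (vq q t : ℝ)) * (Complex.I * (uq q t : ℝ)) *
          (1 - (q:ℂ) * z t) +
          Complex.exp (Complex.I * (vq q t : ℝ)) * -((q:ℂ) * (Complex.I * z t))) * (z t - q) -
          Complex.exp (Complex.I * (vq q t : ℝ)) * (1 - (q:ℂ) * z t) * (Complex.I * z t) = 0 := by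
      linear_combination (Complex.exp (Complex.I * (vq q t : ℝ)) * Complex.I) * hkey
    exact h.congr_deriv (by simp only [Pi.mul_apply]; rw [key, zero_div])
  have hconst : g θ = g 0 :=
    is_const_of_deriv_eq_zero (fun t => (hgd t).differentiableAt)
      (fun t => (hgd t).deriv) θ 0
  have hg0 : g 0 = 1 := by
    have hv0 : vq q 0 = 0 := intervalIntegral.integral_same
    have hz0 : z 0 = 1 := by simp [hzdef]
    simp only [hgdef, hv0, hz0, Complex.ofReal_zero, mul_zero, Complex.exp_zero, one_mul]
    rw [div_eq_one_iff_eq]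
    · ring
    · have h := hzq 0; rwa [hz0] at h
  have hgθ : Complex.exp (Complex.I * (vq q θ : ℝ)) * (1 - (q:ℂ) * z θ) = z θ - q := by
    have h := hconst.trans hg0
    simp only [hgdef] at h
    rwa [div_eq_one_iff_eq (hzq θ)] at h
  rw [Complex.exp_neg, eq_div_iff (hzq θ), inv_mul_eq_div,
    div_eq_iff (Complex.exp_ne_zero _)]
  linear_combination -hgθ
end

section
/- Let m be a positive integer, q, q₀, q₁ ∈ (-1,1). The Hessian of the hyperoctahedral Morse function, given by H_{jj}(ξ) = 2(m+1) + u_{q₀}(ξ_j) + u_{q₁}(ξ_j) + Σ_{l≠j}(u_q(ξ_j+ξ_l) + u_q(ξ_j-ξ_l)) and H_{jk}(ξ) = u_q(ξ_j+ξ_k) - u_q(ξ_j-ξ_k) for j≠k, satisfies Σ_{j,k} H_{jk}(ξ) x_j x_k ≥ 2(m+1) Σ_j x_j² for all x, ξ ∈ ℝⁿ. -/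
lemma uq_pos {q : ℝ} (hq : -1 < q) (hq' : q < 1) (θ : ℝ) : 0 < uq q θ := by
  unfold uq
  have habs : |q * Real.cos θ| < 1 := by
    rw [abs_mul]
    calc |q| * |Real.cos θ| ≤ |q| * 1 := by
          gcongr; exact Real.abs_cos_le_one θ
      _ < 1 := by rw [mul_one]; exact abs_lt.2 ⟨hq, hq'⟩
  have hqc : q * Real.cos θ < 1 := lt_of_le_of_lt (le_abs_self _) habs
  have hc2 : Real.cos θ ^ 2 ≤ 1 := by
    nlinarith [Real.cos_le_one θ, Real.neg_one_le_cos θ]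
  apply div_pos
  · nlinarith
  · nlinarith [mul_pos (by linarith : (0:ℝ) < 1 - q * Real.cos θ)
        (by linarith : (0:ℝ) < 1 - q * Real.cos θ),
      mul_nonneg (sq_nonneg q) (by linarith : (0:ℝ) ≤ 1 - Real.cos θ ^ 2)]

lemma uq_neg (q θ : ℝ) : uq q (-θ) = uq q θ := by simp [uq]

lemma swap_general {n : ℕ} (F : Fin n → Fin n → ℝ) :
    ∑ j, ∑ k ∈ Finset.univ.erase j, F j k = ∑ j, ∑ k ∈ Finset.univ.erase j, F k j := by
  have h1 : ∀ j : Fin n, ∑ k ∈ Finset.univ.erase j, F j k = (∑ k, F j k) - F j j :=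
    fun j => Finset.sum_erase_eq_sub (Finset.mem_univ j)
  have h2 : ∀ j : Fin n, ∑ k ∈ Finset.univ.erase j, F k j = (∑ k, F k j) - F j j :=
    fun j => Finset.sum_erase_eq_sub (Finset.mem_univ j)
  simp only [h1, h2, Finset.sum_sub_distrib]
  rw [Finset.sum_comm]

theorem hessian_bound_typeB (n m : ℕ) (hm : 0 < m)
    (q q0 q1 : ℝ) (hq : -1 < q) (hq' : q < 1) (hq0 : -1 < q0) (hq0' : q0 < 1)
    (hq1 : -1 < q1) (hq1' : q1 < 1)
    (ξ : Fin n → ℝ) (H : Matrix (Fin n) (Fin n) ℝ)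
    (hH : ∀ j k : Fin n, H j k =
      if j = k then
        2 * ((m : ℝ) + 1) + uq q0 (ξ j) + uq q1 (ξ j) +
          ∑ l ∈ Finset.univ.erase j, (uq q (ξ j + ξ l) + uq q (ξ j - ξ l))
      else uq q (ξ j + ξ k) - uq q (ξ j - ξ k)) :
    ∀ x : Fin n → ℝ, 2 * ((m : ℝ) + 1) * ∑ j, x j ^ 2 ≤ ∑ j, ∑ k, H j k * x j * x k := by
  intro x
  set a : Fin n → Fin n → ℝ := fun j k => uq q (ξ j + ξ k) with ha
  set b : Fin n → Fin n → ℝ := fun j k => uq q (ξ j - ξ k) with hb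
  have hapos : ∀ j k, 0 < a j k := fun j k => uq_pos hq hq' _
  have hbpos : ∀ j k, 0 < b j k := fun j k => uq_pos hq hq' _
  have hasymm : ∀ j k, a j k = a k j := by intro j k; simp only [ha]; rw [add_comm]
  have hbsymm : ∀ j k, b j k = b k j := by
    intro j k; simp only [hb]
    rw [show ξ j - ξ k = -(ξ k - ξ j) by ring, uq_neg]
  set D : Fin n → ℝ := fun j => 2 * ((m : ℝ) + 1) + uq q0 (ξ j) + uq q1 (ξ j) with hD
  set T : ℝ := ∑ j, ∑ k ∈ Finset.univ.erase j,
      ((a j k + b j k) * x j ^ 2 + (a j k - b j k) * (x j * x k)) with hT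
  set G : ℝ := ∑ j, ∑ k ∈ Finset.univ.erase j,
      (a j k * (x j + x k) ^ 2 + b j k * (x j - x k) ^ 2) with hG
  -- main decomposition
  have hrow : ∀ j : Fin n, ∑ k, H j k * x j * x k
      = D j * x j ^ 2 + ∑ k ∈ Finset.univ.erase j,
          ((a j k + b j k) * x j ^ 2 + (a j k - b j k) * (x j * x k)) := by
    intro j
    rw [← Finset.add_sum_erase Finset.univ (fun k => H j k * x j * x k) (Finset.mem_univ j)]
    rw [hH j j, if_pos rfl]
    have h2 : ∑ k ∈ Finset.univ.erase j, H j k * x j * x k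
        = ∑ k ∈ Finset.univ.erase j, (a j k - b j k) * (x j * x k) := by
      refine Finset.sum_congr rfl fun k hk => ?_
      rw [hH j k, if_neg (Ne.symm (Finset.ne_of_mem_erase hk))]
      simp only [ha, hb]; ring
    have h1 : (2 * ((m : ℝ) + 1) + uq q0 (ξ j) + uq q1 (ξ j) +
          ∑ l ∈ Finset.univ.erase j, (uq q (ξ j + ξ l) + uq q (ξ j - ξ l))) * x j * x j
        = D j * x j ^ 2 + ∑ k ∈ Finset.univ.erase j, (a j k + b j k) * x j ^ 2 := by
      have hs : (∑ l ∈ Finset.univ.erase j, (uq q (ξ j + ξ l) + uq q (ξ j - ξ l))) *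
            (x j * x j)
          = ∑ k ∈ Finset.univ.erase j, (a j k + b j k) * x j ^ 2 := by
        rw [Finset.sum_mul]
        exact Finset.sum_congr rfl fun k _ => by simp only [ha, hb]; ring
      rw [← hs]; simp only [hD]; ring
    rw [h1, h2, Finset.sum_add_distrib]; ring
  have main : ∑ j, ∑ k, H j k * x j * x k = (∑ j, D j * x j ^ 2) + T := by
    simp only [hrow, Finset.sum_add_distrib, hT]
  -- G = 2 * T
  set S1 : ℝ := ∑ j, ∑ k ∈ Finset.univ.erase j, (a j k + b j k) * x j ^ 2 with hS1
  set S2 : ℝ := ∑ j, ∑ k ∈ Finset.univ.erase j, (a j k - b j k) * (x j * x k) with hS2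
  have hswap : ∑ j, ∑ k ∈ Finset.univ.erase j, (a j k + b j k) * x k ^ 2 = S1 := by
    rw [swap_general (fun j k => (a j k + b j k) * x k ^ 2)]
    refine Finset.sum_congr rfl fun j _ => Finset.sum_congr rfl fun k _ => ?_
    rw [hasymm k j, hbsymm k j]
  have hTsplit : T = S1 + S2 := by
    simp only [hT, hS1, hS2, ← Finset.sum_add_distrib]
  have hGT : G = 2 * T := by
    have hexp : G = ∑ j, ∑ k ∈ Finset.univ.erase j,
        ((a j k + b j k) * x j ^ 2 + ((a j k + b j k) * x k ^ 2
          + 2 * ((a j k - b j k) * (x j * x k)))) := by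
      refine Finset.sum_congr rfl fun j _ => Finset.sum_congr rfl fun k _ => ?_
      ring
    have hmul : ∑ j, ∑ k ∈ Finset.univ.erase j, 2 * ((a j k - b j k) * (x j * x k))
        = 2 * S2 := by
      simp only [hS2, Finset.mul_sum]
    rw [hexp]
    simp only [Finset.sum_add_distrib]
    rw [hswap, hmul, hTsplit, ← hS1]
    ring
  have hGnonneg : (0:ℝ) ≤ G := by
    refine Finset.sum_nonneg fun j _ => Finset.sum_nonneg fun k _ => ?_
    have := hapos j k
    have := hbpos j k
    positivity
  have hTnonneg : (0:ℝ) ≤ T := by linarith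
  have hDge : 2 * ((m : ℝ) + 1) * ∑ j, x j ^ 2 ≤ ∑ j, D j * x j ^ 2 := by
    rw [Finset.mul_sum]
    refine Finset.sum_le_sum fun j _ => ?_
    have h0 := uq_pos hq0 hq0' (ξ j)
    have h1 := uq_pos hq1 hq1' (ξ j)
    have := sq_nonneg (x j)
    simp only [hD]
    nlinarith
  rw [main]
  linarith
end

section
/- If a vector ξ ∈ ℝⁿ satisfies the hyperoctahedral critical equations 2(m+1)ξ_j + v_{q₀}(ξ_j) + v_{q₁}(ξ_j) + Σ_{k≠j}(v_q(ξ_j+ξ_k) + v_q(ξ_j-ξ_k)) = 2π(λ_j + n + 1 - j) for j = 1,…,n, where m ≥ λ₁ ≥ ⋯ ≥ λ_n ≥ 0 are integers and q, q₀, q₁ ∈ (-1,1), then π > ξ₁ > ξ₂ > ⋯ > ξ_n > 0. -/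
noncomputable def gp (p θ : ℝ) : ℝ :=
  θ + 2 * Real.arctan (p * Real.sin θ / (1 - p * Real.cos θ))

lemma pc_lt_one {p : ℝ} (hp : |p| < 1) (θ : ℝ) : p * Real.cos θ < 1 := by
  calc p * Real.cos θ ≤ |p * Real.cos θ| := le_abs_self _
  _ = |p| * |Real.cos θ| := abs_mul _ _
  _ ≤ |p| * 1 := mul_le_mul_of_nonneg_left (Real.abs_cos_le_one θ) (abs_nonneg p)
  _ < 1 := by rw [mul_one]; exact hp

lemma denom_pos {p : ℝ} (hp : |p| < 1) (θ : ℝ) :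
    0 < 1 - 2 * p * Real.cos θ + p ^ 2 := by
  have hD : (0:ℝ) < 1 - p * Real.cos θ := by linarith [pc_lt_one hp θ]
  have hs := Real.sin_sq_add_cos_sq θ
  have key : 1 - 2 * p * Real.cos θ + p ^ 2
      = (1 - p * Real.cos θ) ^ 2 + (p * Real.sin θ) ^ 2 := by
    linear_combination (-(p ^ 2)) * hs
  have h2 := pow_pos hD 2
  have h3 := sq_nonneg (p * Real.sin θ)
  linarith

lemma uq_nonneg {p : ℝ} (hp : |p| < 1) (θ : ℝ) : 0 ≤ uq p θ := by
  have h1 : p ^ 2 < 1 := by nlinarith [sq_abs p, abs_nonneg p]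
  exact div_nonneg (by linarith) (denom_pos hp θ).le

lemma uq_continuous {p : ℝ} (hp : |p| < 1) : Continuous (uq p) := by
  apply Continuous.div continuous_const (by continuity)
  exact fun θ => (denom_pos hp θ).ne'

lemma uq_intble {p : ℝ} (hp : |p| < 1) (a b : ℝ) :
    IntervalIntegrable (uq p) MeasureTheory.volume a b :=
  (uq_continuous hp).intervalIntegrable a b

lemma hasDerivAt_gp {p : ℝ} (hp : |p| < 1) (θ : ℝ) :
    HasDerivAt (gp p) (uq p θ) θ := by
  have hD : (0:ℝ) < 1 - p * Real.cos θ := by linarith [pc_lt_one hp θ]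
  have hA := denom_pos hp θ
  have h1 : HasDerivAt (fun x => p * Real.sin x) (p * Real.cos θ) θ :=
    (Real.hasDerivAt_sin θ).const_mul p
  have h2 : HasDerivAt (fun x => 1 - p * Real.cos x) (p * Real.sin θ) θ := by
    have := ((Real.hasDerivAt_cos θ).const_mul p).const_sub 1
    simpa using this
  have h3 := (h1.div h2 hD.ne').arctan
  have h4 := ((h3.const_mul 2).const_add 0)
  have h5 := (hasDerivAt_id θ).add (h3.const_mul 2)
  have h6 : HasDerivAt (gp p)
      (1 + 2 * (1 / (1 + (p * Real.sin θ / (1 - p * Real.cos θ)) ^ 2) *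
        ((p * Real.cos θ * (1 - p * Real.cos θ) - p * Real.sin θ * (p * Real.sin θ)) /
          (1 - p * Real.cos θ) ^ 2))) θ := by
    have hf : gp p = (id + fun y => 2 * Real.arctan (((fun x => p * Real.sin x) / fun x => 1 - p * Real.cos x) y)) := by
      funext x; simp [gp]
    rw [hf]; simpa [mul_comm] using h5
  have hs := Real.sin_sq_add_cos_sq θ
  have e3 : p * Real.cos θ * (1 - p * Real.cos θ) - p * Real.sin θ * (p * Real.sin θ)
      = p * Real.cos θ - p ^ 2 := by linear_combination (-(p ^ 2)) * hs
  have e2 : 1 + (p * Real.sin θ / (1 - p * Real.cos θ)) ^ 2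
      = (1 - 2 * p * Real.cos θ + p ^ 2) / (1 - p * Real.cos θ) ^ 2 := by
    field_simp
    linear_combination (p ^ 2) * hs
  rw [e3, e2] at h6
  convert h6 using 1
  have hc : (1 - p * Real.cos θ) ^ 2 ≠ 0 := by positivity
  have key : 1 / ((1 - 2 * p * Real.cos θ + p ^ 2) / (1 - p * Real.cos θ) ^ 2) *
      ((p * Real.cos θ - p ^ 2) / (1 - p * Real.cos θ) ^ 2)
      = (p * Real.cos θ - p ^ 2) / (1 - 2 * p * Real.cos θ + p ^ 2) := by
    rw [one_div_div, div_mul_div_comm, mul_comm ((1 - p * Real.cos θ) ^ 2) (p * Real.cos θ - p ^ 2),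
      mul_div_mul_right _ _ hc]
  rw [key, uq, div_eq_iff hA.ne', add_mul,
    mul_assoc (2:ℝ) ((p * Real.cos θ - p ^ 2) / (1 - 2 * p * Real.cos θ + p ^ 2)), div_mul_cancel₀ _ hA.ne']
  ring

lemma vq_eq_gp {p : ℝ} (hp : |p| < 1) (θ : ℝ) : vq p θ = gp p θ := by
  have h : ∫ t in (0:ℝ)..θ, uq p t = gp p θ - gp p 0 :=
    intervalIntegral.integral_eq_sub_of_hasDerivAt (fun t _ => hasDerivAt_gp hp t)
      (uq_intble hp 0 θ)
  have h0 : gp p 0 = 0 := by simp [gp]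
  rw [vq, h, h0, sub_zero]

lemma vq_zero (p : ℝ) : vq p 0 = 0 := by simp [vq]

lemma vq_mono {p : ℝ} (hp : |p| < 1) {a b : ℝ} (hab : a ≤ b) : vq p a ≤ vq p b := by
  have h : vq p a + ∫ t in a..b, uq p t = vq p b := by
    rw [vq, vq]
    exact intervalIntegral.integral_add_adjacent_intervals (uq_intble hp 0 a) (uq_intble hp a b)
  have h2 : 0 ≤ ∫ t in a..b, uq p t :=
    intervalIntegral.integral_nonneg hab (fun x _ => uq_nonneg hp x)
  linarith

lemma vq_neg {p : ℝ} (hp : |p| < 1) (θ : ℝ) : vq p (-θ) = -(vq p θ) := by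
  rw [vq_eq_gp hp, vq_eq_gp hp]
  simp [gp, Real.arctan_neg, neg_div]
  ring

lemma vq_pi {p : ℝ} (hp : |p| < 1) : vq p Real.pi = Real.pi := by
  rw [vq_eq_gp hp]
  simp [gp]

lemma vq_pi_symm {p : ℝ} (hp : |p| < 1) (x : ℝ) :
    vq p (Real.pi + x) + vq p (Real.pi - x) = 2 * Real.pi := by
  rw [vq_eq_gp hp, vq_eq_gp hp]
  have h1 : Real.sin (Real.pi + x) = -Real.sin x := by
    rw [Real.sin_add]; simp
  have h2 : Real.cos (Real.pi + x) = -Real.cos x := by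
    rw [Real.cos_add]; simp
  rw [gp, gp, h1, h2, Real.sin_pi_sub, Real.cos_pi_sub]
  have : p * -Real.sin x / (1 - p * -Real.cos x) =
      -(p * Real.sin x / (1 - p * -Real.cos x)) := by ring
  rw [this, Real.arctan_neg]
  ring

theorem nodes_in_alcove_typeB (n m : ℕ) (hm : 0 < m)
    (q q0 q1 : ℝ) (hq : -1 < q) (hq' : q < 1) (hq0 : -1 < q0) (hq0' : q0 < 1)
    (hq1 : -1 < q1) (hq1' : q1 < 1)
    (lam : Fin n → ℤ)
    (hmono : ∀ j k : Fin n, j ≤ k → lam k ≤ lam j)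
    (hub : ∀ j : Fin n, lam j ≤ m) (hlb : ∀ j : Fin n, 0 ≤ lam j)
    (ξ : Fin n → ℝ)
    (hcrit : ∀ j : Fin n,
      2 * ((m : ℝ) + 1) * ξ j + vq q0 (ξ j) + vq q1 (ξ j) +
          ∑ k ∈ Finset.univ.erase j, (vq q (ξ j + ξ k) + vq q (ξ j - ξ k)) =
        2 * Real.pi * ((lam j : ℝ) + (n : ℝ) + 1 - ((j : ℕ) + 1))) :
    (∀ j : Fin n, 0 < ξ j ∧ ξ j < Real.pi) ∧
      ∀ j k : Fin n, j < k → ξ k < ξ j := by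
  have hqa : |q| < 1 := abs_lt.mpr ⟨hq, hq'⟩
  have hq0a : |q0| < 1 := abs_lt.mpr ⟨hq0, hq0'⟩
  have hq1a : |q1| < 1 := abs_lt.mpr ⟨hq1, hq1'⟩
  have hπ := Real.pi_pos
  have hm0 : (0:ℝ) ≤ (m:ℝ) := Nat.cast_nonneg m
  -- Part 1 : strict ordering
  have horder : ∀ j k : Fin n, j < k → ξ k < ξ j := by
    intro j k hjk
    by_contra hle
    push_neg at hle
    have hne : j ≠ k := ne_of_lt hjk
    have hkj : k ≠ j := hne.symm
    have hsplit : ∀ a b : Fin n, a ≠ b →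
        ∑ l ∈ Finset.univ.erase a, (vq q (ξ a + ξ l) + vq q (ξ a - ξ l))
        = (vq q (ξ a + ξ b) + vq q (ξ a - ξ b)) +
          ∑ l ∈ (Finset.univ.erase a).erase b, (vq q (ξ a + ξ l) + vq q (ξ a - ξ l)) := by
      intro a b hab
      conv_lhs => rw [← Finset.insert_erase (Finset.mem_erase.mpr ⟨hab.symm, Finset.mem_univ b⟩)]
      rw [Finset.sum_insert (Finset.notMem_erase b _)]
    have e1 := hcrit j
    have e2 := hcrit k
    rw [hsplit j k hne] at e1
    rw [hsplit k j hkj] at e2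
    have hT : (Finset.univ.erase j).erase k = (Finset.univ.erase k).erase j := by
      ext l; simp only [Finset.mem_erase, Finset.mem_univ, and_true]; tauto
    have hsum : ∑ l ∈ (Finset.univ.erase j).erase k, (vq q (ξ j + ξ l) + vq q (ξ j - ξ l))
        ≤ ∑ l ∈ (Finset.univ.erase k).erase j, (vq q (ξ k + ξ l) + vq q (ξ k - ξ l)) := by
      rw [← hT]
      exact Finset.sum_le_sum fun l _ =>
        add_le_add (vq_mono hqa (by linarith)) (vq_mono hqa (by linarith))
    have hpair : vq q (ξ j + ξ k) + vq q (ξ j - ξ k)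
        ≤ vq q (ξ k + ξ j) + vq q (ξ k - ξ j) :=
      add_le_add (vq_mono hqa (by linarith)) (vq_mono hqa (by linarith))
    have hlin : 2 * ((m:ℝ)+1) * ξ j ≤ 2 * ((m:ℝ)+1) * ξ k :=
      mul_le_mul_of_nonneg_left hle (by positivity)
    have hv0 := vq_mono hq0a hle
    have hv1 := vq_mono hq1a hle
    have hLHS : 2*Real.pi*((lam j : ℝ) + n + 1 - ((j:ℕ)+1))
        ≤ 2*Real.pi*((lam k : ℝ) + n + 1 - ((k:ℕ)+1)) := by
      rw [← e1, ← e2]; linarith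
    have hlam : (lam k : ℝ) ≤ (lam j : ℝ) := by exact_mod_cast hmono j k hjk.le
    have hjknat : (j:ℕ) + 1 ≤ (k:ℕ) := Fin.lt_def.mp hjk
    have hjk' : ((j:ℕ):ℝ) + 1 ≤ ((k:ℕ):ℝ) := by exact_mod_cast hjknat
    have hcd : (lam k:ℝ) + n + 1 - ((k:ℕ)+1) + 1 ≤ (lam j:ℝ) + n + 1 - ((j:ℕ)+1) := by
      linarith
    linarith [mul_le_mul_of_nonneg_left hcd (by positivity : (0:ℝ) ≤ 2*Real.pi)]
  -- Part 2 : positivity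
  have hpos : ∀ j : Fin n, 0 < ξ j := by
    intro j0
    obtain ⟨i, -, hi⟩ := Finset.exists_min_image Finset.univ ξ ⟨j0, Finset.mem_univ j0⟩
    have h0 : 0 < ξ i := by
      by_contra hc
      push_neg at hc
      have e := hcrit i
      have hterm : ∀ l ∈ Finset.univ.erase i, vq q (ξ i + ξ l) + vq q (ξ i - ξ l) ≤ 0 := by
        intro l _
        have h1 : vq q (ξ i + ξ l) ≤ vq q (ξ l) := vq_mono hqa (by linarith)
        have h2 : vq q (ξ i - ξ l) ≤ vq q (-(ξ l)) := vq_mono hqa (by linarith)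
        rw [vq_neg hqa] at h2
        linarith
      have hsum := Finset.sum_nonpos hterm
      have hv0 : vq q0 (ξ i) ≤ 0 := by
        have := vq_mono hq0a hc; rwa [vq_zero] at this
      have hv1 : vq q1 (ξ i) ≤ 0 := by
        have := vq_mono hq1a hc; rwa [vq_zero] at this
      have hlin : 2 * ((m:ℝ)+1) * ξ i ≤ 0 := by
        have h2m : (0:ℝ) ≤ 2 * ((m:ℝ)+1) := by positivity
        exact mul_nonpos_iff.mpr (Or.inl ⟨h2m, hc⟩)
      have h1n : (i:ℕ) + 1 ≤ n := i.isLt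
      have h1 : ((i:ℕ):ℝ) + 1 ≤ (n:ℝ) := by exact_mod_cast h1n
      have h2 : (0:ℝ) ≤ (lam i : ℝ) := by exact_mod_cast hlb i
      have hc1 : (1:ℝ) ≤ (lam i:ℝ) + n + 1 - ((i:ℕ)+1) := by linarith
      have hrhs : (0:ℝ) < 2*Real.pi*((lam i : ℝ) + n + 1 - ((i:ℕ)+1)) :=
        mul_pos (by positivity) (by linarith)
      linarith
    exact lt_of_lt_of_le h0 (hi j0 (Finset.mem_univ j0))
  -- Part 3 : upper bound
  have hup : ∀ j : Fin n, ξ j < Real.pi := by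
    intro j0
    obtain ⟨i, -, hi⟩ := Finset.exists_max_image Finset.univ ξ ⟨j0, Finset.mem_univ j0⟩
    have h0 : ξ i < Real.pi := by
      by_contra hc
      push_neg at hc
      have e := hcrit i
      have hterm : ∀ l ∈ Finset.univ.erase i,
          2*Real.pi ≤ vq q (ξ i + ξ l) + vq q (ξ i - ξ l) := by
        intro l _
        have h1 : vq q (Real.pi + ξ l) ≤ vq q (ξ i + ξ l) := vq_mono hqa (by linarith)
        have h2 : vq q (Real.pi - ξ l) ≤ vq q (ξ i - ξ l) := vq_mono hqa (by linarith)
        have h3 := vq_pi_symm hqa (ξ l)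
        linarith
      have hcard : (Finset.univ.erase i).card = n - 1 := by
        rw [Finset.card_erase_of_mem (Finset.mem_univ i), Finset.card_univ, Fintype.card_fin]
      have hn1 : 1 ≤ n := i.pos
      have hsum : ((n:ℝ) - 1) * (2*Real.pi)
          ≤ ∑ l ∈ Finset.univ.erase i, (vq q (ξ i + ξ l) + vq q (ξ i - ξ l)) := by
        have h := Finset.card_nsmul_le_sum (Finset.univ.erase i) _ _ hterm
        rw [hcard] at h
        calc ((n:ℝ)-1) * (2*Real.pi) = ((n-1 : ℕ):ℝ) * (2*Real.pi) := by
              rw [Nat.cast_sub hn1]; push_cast; ring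
        _ = (n-1 : ℕ) • (2*Real.pi) := (nsmul_eq_mul _ _).symm
        _ ≤ _ := h
      have hv0 : Real.pi ≤ vq q0 (ξ i) := by
        have := vq_mono hq0a hc; rwa [vq_pi hq0a] at this
      have hv1 : Real.pi ≤ vq q1 (ξ i) := by
        have := vq_mono hq1a hc; rwa [vq_pi hq1a] at this
      have hlin : 2*((m:ℝ)+1)*Real.pi ≤ 2*((m:ℝ)+1)*ξ i :=
        mul_le_mul_of_nonneg_left hc (by positivity)
      have h1 : (lam i:ℝ) ≤ (m:ℝ) := by exact_mod_cast hub i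
      have h2 : (0:ℝ) ≤ ((i:ℕ):ℝ) := Nat.cast_nonneg _
      have hcu : (lam i:ℝ) + n + 1 - ((i:ℕ)+1) ≤ (m:ℝ) + (n:ℝ) := by linarith
      have hrhs : 2*Real.pi*((lam i:ℝ)+n+1-((i:ℕ)+1)) ≤ 2*Real.pi*((m:ℝ)+(n:ℝ)) :=
        mul_le_mul_of_nonneg_left hcu (by positivity)
      linarith
    exact lt_of_le_of_lt (hi j0 (Finset.mem_univ j0)) h0
  exact ⟨fun j => ⟨hpos j, hup j⟩, horder⟩
end

section
/- Let n ≥ 2, q ∈ (-1,1). Define C_a(ξ;q) = Π_{1≤j<k≤n} (1 - q e^{-i(ξ_j-ξ_k)})/(1 - e^{-i(ξ_j-ξ_k)}) on points ξ with e^{iξ_j} pairwise distinct, and the Hall-Littlewood polynomial P_μ(ξ;q) = Σ_{σ∈S_n} C_a(ξ_{σ(1)},…,ξ_{σ(n)};q) exp(i Σ_j ξ_{σ(j)} μ_j). If μ ∈ ℤⁿ (or more generally μ in the integral span of the fundamental weights) satisfies μ_j - μ_{j+1} = -1 for some j ∈ {1,…,n-1}, then P_μ(ξ;q) = q · P_{μ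 + e_j - e_{j+1}}(ξ;q). -/
open Complex

noncomputable def Ca (n : ℕ) (q : ℝ) (ξ : Fin n → ℝ) : ℂ :=
  ∏ p ∈ Finset.univ.filter (fun p : Fin n × Fin n => p.1 < p.2),
    (1 - (q : ℂ) * Complex.exp (-Complex.I * ((ξ p.1 - ξ p.2 : ℝ) : ℂ))) /
      (1 - Complex.exp (-Complex.I * ((ξ p.1 - ξ p.2 : ℝ) : ℂ)))

noncomputable def HLa (n : ℕ) (q : ℝ) (μ : Fin n → ℤ) (ξ : Fin n → ℝ) : ℂ :=
  ∑ σ : Equiv.Perm (Fin n),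
    Ca n q (fun j => ξ (σ j)) *
      Complex.exp (Complex.I * ∑ j, ((ξ (σ j) : ℝ) : ℂ) * ((μ j : ℤ) : ℂ))

/-- Auxiliary: a single factor of `Ca`. -/
noncomputable def HLfac (q : ℝ) (d : ℝ) : ℂ :=
  (1 - (q : ℂ) * Complex.exp (-Complex.I * (d : ℂ))) /
      (1 - Complex.exp (-Complex.I * (d : ℂ)))

theorem HL_keyalg (q : ℝ) (z : ℂ) (hz0 : z ≠ 0) (hz1 : z ≠ 1) :
    ((1 - (q:ℂ)*z)/(1-z) - q*((1 - q*z⁻¹)/(1-z⁻¹)))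
      + ((1 - (q:ℂ)*z⁻¹)/(1-z⁻¹) - q*((1-q*z)/(1-z))) * z⁻¹ = 0 := by
  have h1 : (1:ℂ) - z ≠ 0 := sub_ne_zero.mpr (Ne.symm hz1)
  have h1' : z - 1 ≠ 0 := sub_ne_zero.mpr hz1
  have h2 : (1:ℂ) - z⁻¹ ≠ 0 := by
    rw [sub_ne_zero]
    intro h
    exact hz1 (by rw [← inv_inv z, ← h, inv_one])
  have e1 : (1 - (q:ℂ)*z⁻¹)/(1-z⁻¹) = (z - q)/(z-1) := by
    rw [div_eq_div_iff h2 h1']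
    field_simp
  rw [e1]
  field_simp
  ring

theorem HL_swap_lt {n : ℕ} (j k : Fin n) (hjk : (k:ℕ) = (j:ℕ) + 1)
    (a b : Fin n) (hab : a < b) (hne : (a, b) ≠ (j, k)) :
    Equiv.swap j k a < Equiv.swap j k b := by
  have hab' : (a:ℕ) < (b:ℕ) := hab
  have hne' : (a:ℕ) ≠ (j:ℕ) ∨ (b:ℕ) ≠ (k:ℕ) := by
    by_contra h
    push_neg at h
    exact hne (by simp [Prod.ext_iff, Fin.ext_iff, h.1, h.2])
  rw [Equiv.swap_apply_def, Equiv.swap_apply_def, Fin.lt_def]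
  simp only [Fin.ext_iff]
  split_ifs <;> simp_all (config := {decide := false}) [Fin.ext_iff] <;> omega

theorem HL_Ca_split {n : ℕ} (q : ℝ) (η : Fin n → ℝ) (j k : Fin n) (hjk : (k:ℕ) = (j:ℕ) + 1) :
    Ca n q η =
      (∏ p ∈ (Finset.univ.filter (fun p : Fin n × Fin n => p.1 < p.2)).erase (j, k),
        HLfac q (η p.1 - η p.2)) * HLfac q (η j - η k) ∧
    Ca n q (fun l => η (Equiv.swap j k l)) =
      (∏ p ∈ (Finset.univ.filter (fun p : Fin n × Fin n => p.1 < p.2)).erase (j, k),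
        HLfac q (η p.1 - η p.2)) * HLfac q (η k - η j) := by
  have hjk' : j < k := by rw [Fin.lt_def]; omega
  have hmem : (j, k) ∈ Finset.univ.filter (fun p : Fin n × Fin n => p.1 < p.2) := by
    simp [hjk']
  constructor
  · rw [Ca, ← Finset.mul_prod_erase _ _ hmem, mul_comm]
    rfl
  · rw [Ca, ← Finset.mul_prod_erase _ _ hmem, mul_comm]
    simp only [Equiv.swap_apply_left, Equiv.swap_apply_right]
    congr 1
    refine Finset.prod_nbij' (fun p => (Equiv.swap j k p.1, Equiv.swap j k p.2))
      (fun p => (Equiv.swap j k p.1, Equiv.swap j k p.2)) ?_ ?_ ?_ ?_ ?_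
    · rintro ⟨a, b⟩ hab
      simp only [Finset.mem_erase, Finset.mem_filter, Finset.mem_univ, true_and] at hab ⊢
      refine ⟨?_, HL_swap_lt j k hjk a b hab.2 hab.1⟩
      intro h
      rw [Prod.ext_iff] at h
      have : a = k ∧ b = j := by
        constructor
        · have := h.1; rwa [Equiv.swap_apply_eq_iff, Equiv.swap_apply_left] at this
        · have := h.2; rwa [Equiv.swap_apply_eq_iff, Equiv.swap_apply_right] at this
      rw [this.1, this.2] at hab
      exact absurd hab.2 (by rw [Fin.lt_def]; omega)
    · rintro ⟨a, b⟩ hab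
      simp only [Finset.mem_erase, Finset.mem_filter, Finset.mem_univ, true_and] at hab ⊢
      refine ⟨?_, HL_swap_lt j k hjk a b hab.2 hab.1⟩
      intro h
      rw [Prod.ext_iff] at h
      have : a = k ∧ b = j := by
        constructor
        · have := h.1; rwa [Equiv.swap_apply_eq_iff, Equiv.swap_apply_left] at this
        · have := h.2; rwa [Equiv.swap_apply_eq_iff, Equiv.swap_apply_right] at this
      rw [this.1, this.2] at hab
      exact absurd hab.2 (by rw [Fin.lt_def]; omega)
    · rintro ⟨a, b⟩ _; simp
    · rintro ⟨a, b⟩ _; simp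
    · rintro ⟨a, b⟩ _; simp [HLfac]

/-- The key local identity. -/
theorem HL_key {n : ℕ} (q : ℝ) (η : Fin n → ℝ) (j k : Fin n) (hjk : (k:ℕ) = (j:ℕ) + 1)
    (hexp : Complex.exp (Complex.I * ((η j : ℝ) : ℂ)) ≠
      Complex.exp (Complex.I * ((η k : ℝ) : ℂ))) :
    (Ca n q η - (q:ℂ) * Ca n q (fun l => η (Equiv.swap j k l)))
      + (Ca n q (fun l => η (Equiv.swap j k l)) - (q:ℂ) * Ca n q η) *
          Complex.exp (Complex.I * (((η j : ℝ) : ℂ) - ((η k : ℝ) : ℂ))) = 0 := by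
  obtain ⟨h1, h2⟩ := HL_Ca_split q η j k hjk
  set z := Complex.exp (-Complex.I * ((η j - η k : ℝ) : ℂ)) with hz
  have hz0 : z ≠ 0 := Complex.exp_ne_zero _
  have hzmul : Complex.exp (Complex.I * ((η j : ℝ) : ℂ)) * z =
      Complex.exp (Complex.I * ((η k : ℝ) : ℂ)) := by
    rw [hz, ← Complex.exp_add]
    congr 1
    push_cast
    ring
  have hz1 : z ≠ 1 := by
    intro h
    rw [h, mul_one] at hzmul
    exact hexp hzmul
  have e2 : HLfac q (η k - η j) = (1 - (q:ℂ)*z⁻¹)/(1-z⁻¹) := by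
    have : Complex.exp (-Complex.I * ((η k - η j : ℝ) : ℂ)) = z⁻¹ := by
      rw [hz, ← Complex.exp_neg]
      congr 1
      push_cast
      ring
    rw [HLfac, this]
  have e3 : Complex.exp (Complex.I * (((η j : ℝ) : ℂ) - ((η k : ℝ) : ℂ))) = z⁻¹ := by
    rw [hz, ← Complex.exp_neg]
    congr 1
    push_cast
    ring
  have e1 : HLfac q (η j - η k) = (1 - (q:ℂ)*z)/(1-z) := rfl
  rw [h1, h2, e1, e2, e3]
  have := HL_keyalg q z hz0 hz1
  set P := ∏ p ∈ (Finset.univ.filter (fun p : Fin n × Fin n => p.1 < p.2)).erase (j, k),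
    HLfac q (η p.1 - η p.2)
  linear_combination P * this

theorem HL_straightening_typeA (n : ℕ) (q : ℝ) (hq : -1 < q) (hq' : q < 1)
    (ξ : Fin n → ℝ)
    (hdist : ∀ j k : Fin n, j ≠ k →
      Complex.exp (Complex.I * ((ξ j : ℝ) : ℂ)) ≠ Complex.exp (Complex.I * ((ξ k : ℝ) : ℂ)))
    (μ : Fin n → ℤ) (j k : Fin n) (hjk : (k : ℕ) = (j : ℕ) + 1)
    (hμ : μ j - μ k = -1) :
    HLa n q μ ξ =
      (q : ℂ) * HLa n q (fun l => if l = j then μ j + 1 else if l = k then μ k - 1 else μ l) ξ := by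
  classical
  set s := Equiv.swap j k with hs
  have hjkne : j ≠ k := by
    intro h
    rw [h] at hjk
    omega
  have hμk : μ k = μ j + 1 := by omega
  set μ' : Fin n → ℤ := fun l => if l = j then μ j + 1 else if l = k then μ k - 1 else μ l with hμ'
  have hμ's : ∀ l, μ' l = μ (s l) := by
    intro l
    rw [hμ', hs]
    by_cases h1 : l = j
    · simp [h1, Equiv.swap_apply_left, hμk]
    · by_cases h2 : l = k
      · simp [h1, h2, Equiv.swap_apply_right]
        omega
      · simp [h1, h2, Equiv.swap_apply_of_ne_of_ne h1 h2]
  -- Step 1: rewrite the RHS sum via σ ↦ σ * s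
  have step1 : HLa n q μ' ξ = ∑ σ : Equiv.Perm (Fin n),
      Ca n q (fun l => ξ (σ (s l))) *
        Complex.exp (Complex.I * ∑ l, ((ξ (σ l) : ℝ) : ℂ) * ((μ l : ℤ) : ℂ)) := by
    rw [HLa]
    refine (Fintype.sum_equiv (Equiv.mulRight s) _ _ ?_).symm
    intro σ
    simp only [Equiv.coe_mulRight, Equiv.Perm.mul_apply]
    have hsum : ∑ l, ((ξ (σ (s l)) : ℝ) : ℂ) * ((μ' l : ℤ) : ℂ) =
        ∑ l, ((ξ (σ l) : ℝ) : ℂ) * ((μ l : ℤ) : ℂ) := by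
      rw [← Equiv.sum_comp s (fun l => ((ξ (σ (s l)) : ℝ) : ℂ) * ((μ' l : ℤ) : ℂ))]
      apply Finset.sum_congr rfl
      intro l _
      rw [hμ's]
      simp [hs, Equiv.swap_apply_self]
    rw [hsum]
  rw [step1, HLa, Finset.mul_sum, ← sub_eq_zero, ← Finset.sum_sub_distrib]
  have hterm : ∀ σ : Equiv.Perm (Fin n),
      Ca n q (fun l => ξ (σ l)) *
          Complex.exp (Complex.I * ∑ l, ((ξ (σ l) : ℝ) : ℂ) * ((μ l : ℤ) : ℂ)) -
        (q:ℂ) * (Ca n q (fun l => ξ (σ (s l))) *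
          Complex.exp (Complex.I * ∑ l, ((ξ (σ l) : ℝ) : ℂ) * ((μ l : ℤ) : ℂ))) =
      (Ca n q (fun l => ξ (σ l)) - (q:ℂ) * Ca n q (fun l => ξ (σ (s l)))) *
        Complex.exp (Complex.I * ∑ l, ((ξ (σ l) : ℝ) : ℂ) * ((μ l : ℤ) : ℂ)) := by
    intro σ
    ring
  calc ∑ σ : Equiv.Perm (Fin n),
      (Ca n q (fun l => ξ (σ l)) *
          Complex.exp (Complex.I * ∑ l, ((ξ (σ l) : ℝ) : ℂ) * ((μ l : ℤ) : ℂ)) -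
        (q:ℂ) * (Ca n q (fun l => ξ (σ (s l))) *
          Complex.exp (Complex.I * ∑ l, ((ξ (σ l) : ℝ) : ℂ) * ((μ l : ℤ) : ℂ))))
      = ∑ σ : Equiv.Perm (Fin n),
        (Ca n q (fun l => ξ (σ l)) - (q:ℂ) * Ca n q (fun l => ξ (σ (s l)))) *
          Complex.exp (Complex.I * ∑ l, ((ξ (σ l) : ℝ) : ℂ) * ((μ l : ℤ) : ℂ)) := by
        exact Finset.sum_congr rfl (fun σ _ => hterm σ)
    _ = 0 := by
        apply Finset.sum_ninvolution (fun σ => σ * s)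
        · intro σ
          simp only [Equiv.Perm.mul_apply]
          have hca2 : (fun l => ξ (σ (s (s l)))) = fun l => ξ (σ l) := by
            funext l
            simp [hs, Equiv.swap_apply_self]
          rw [hca2]
          have e : ∑ l, ((ξ (σ (s l)) : ℝ) : ℂ) * ((μ l : ℤ) : ℂ) =
              (∑ l, ((ξ (σ l) : ℝ) : ℂ) * ((μ l : ℤ) : ℂ)) +
                (((ξ (σ j) : ℝ) : ℂ) - ((ξ (σ k) : ℝ) : ℂ)) := by
            have eA : ∑ l, ((ξ (σ (s l)) : ℝ) : ℂ) * ((μ l : ℤ) : ℂ) =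
                ∑ l, ((ξ (σ l) : ℝ) : ℂ) * ((μ (s l) : ℤ) : ℂ) := by
              rw [← Equiv.sum_comp s (fun l => ((ξ (σ l) : ℝ) : ℂ) * ((μ (s l) : ℤ) : ℂ))]
              apply Finset.sum_congr rfl
              intro l _
              simp [hs, Equiv.swap_apply_self]
            rw [eA]
            have e3 : ∀ l : Fin n, ((ξ (σ l) : ℝ) : ℂ) * ((μ (s l) : ℤ) : ℂ)
                = ((ξ (σ l) : ℝ) : ℂ) * ((μ l : ℤ) : ℂ)
                  + ((if l = j then ((ξ (σ j) : ℝ) : ℂ) else 0)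
                    + (if l = k then -((ξ (σ k) : ℝ) : ℂ) else 0)) := by
              intro l
              by_cases h1 : l = j
              · subst h1
                simp [hs, Equiv.swap_apply_left, hμk, if_neg hjkne]
                push_cast
                ring
              · by_cases h2 : l = k
                · have hμj : μ j = μ k - 1 := by omega
                  have hkj : k ≠ j := Ne.symm hjkne
                  simp only [h2, hs, Equiv.swap_apply_right, hμj, if_neg hkj, if_pos rfl]
                  push_cast
                  ring
                · simp [hs, Equiv.swap_apply_of_ne_of_ne h1 h2, h1, h2]
            rw [Finset.sum_congr rfl (fun l _ => e3 l), Finset.sum_add_distrib,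
              Finset.sum_add_distrib]
            simp [sub_eq_add_neg]
          rw [e, mul_add, Complex.exp_add]
          have key := HL_key q (fun l => ξ (σ l)) j k hjk
            (hdist (σ j) (σ k) (fun h => hjkne (σ.injective h)))
          simp only [hs] at *
          linear_combination Complex.exp (Complex.I * ∑ l, ((ξ (σ l) : ℝ) : ℂ) *
            ((μ l : ℤ) : ℂ)) * key
        · intro σ _ h
          have h2 : σ (s j) = σ j := by
            conv_rhs => rw [← h]
            rw [Equiv.Perm.mul_apply]
          have : s j = j := σ.injective h2
          rw [hs, Equiv.swap_apply_left] at this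
          exact hjkne this.symm
        · intro σ; exact Finset.mem_univ _
        · intro σ
          ext l
          simp [Equiv.Perm.mul_apply, hs, Equiv.swap_apply_self]
end
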